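/- Let K be a pure, strongly connected simplicial complex and fix a facet σ₀. Two labeled facets (σ, v) and (τ, w) (where v is a vertex of σ and w a vertex of τ) lie in the same connected component of the partial unfolding of K if and only if there exists a facet path γ from σ to τ with ⟨γ⟩(v) = w. Consequently, the connected components of the partial unfolding of K are in bijection with the orbits of the action of the group of projectivities Π(K, σ₀) on the vertex set V(σ₀). -/

import Mathlib

open Finset

variable {V : Type*} [DecidableEq V]

/-- A (finite abstract) simplicial complex: faces are nonempty and closed under
nonempty subsets. -/
def IsComplex (K : Finset (Finset V)) : Prop :=
  ∀ f ∈ K, f.Nonempty ∧ ∀ g, g ⊆ f → g.Nonempty → g ∈ K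

/-- `K` is pure of dimension `d`: every face is contained in a face with `d+1` vertices. -/
def IsPure (K : Finset (Finset V)) (d : ℕ) : Prop :=
  ∀ f ∈ K, ∃ σ ∈ K, f ⊆ σ ∧ σ.card = d + 1

/-- A facet of a pure `d`-complex: a face with `d+1` vertices. -/
def IsFacet (K : Finset (Finset V)) (d : ℕ) (σ : Finset V) : Prop :=
  σ ∈ K ∧ σ.card = d + 1

/-- Two facets are neighboring if they share a ridge (codimension-1 face). -/
def Neighboring (K : Finset (Finset V)) (d : ℕ) (σ τ : Finset V) : Prop :=
  IsFacet K d σ ∧ IsFacet K d τ ∧ (σ ∩ τ).card = d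

/-- The perspectivity `⟨σ,τ⟩` between neighboring facets: it fixes the common
vertices and sends the vertex `σ \ τ` to the vertex `τ \ σ`. -/
noncomputable def persp (σ τ : Finset V) (v : V) : V :=
  if v ∈ τ then v else if h : (τ \ σ).Nonempty then h.choose else v

/-- The projectivity along a facet path: the composition of consecutive perspectivities. -/
noncomputable def projAlong : List (Finset V) → V → V
  | [] => id
  | [_] => id
  | σ :: τ :: rest => fun v => projAlong (τ :: rest) (persp σ τ v)

/-- A facet path: a nonempty sequence of facets in which consecutive facets share a ridge. -/
def IsFacetPath (K : Finset (Finset V)) (d : ℕ) (γ : List (Finset V)) : Prop :=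
  γ ≠ [] ∧ (∀ σ ∈ γ, IsFacet K d σ) ∧ γ.Chain' (fun σ τ => (σ ∩ τ).card = d)

/-- `K` is strongly connected: any two facets are joined by a facet path. -/
def StronglyConnected (K : Finset (Finset V)) (d : ℕ) : Prop :=
  ∀ σ τ, IsFacet K d σ → IsFacet K d τ →
    ∃ γ, IsFacetPath K d γ ∧ γ.head? = some σ ∧ γ.getLast? = some τ

/-- `K` is locally strongly connected: the star of every face is strongly connected. -/
def LocallyStronglyConnected (K : Finset (Finset V)) (d : ℕ) : Prop :=
  ∀ f ∈ K, ∀ σ τ, IsFacet K d σ → IsFacet K d τ → f ⊆ σ → f ⊆ τ →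
    ∃ γ, IsFacetPath K d γ ∧ γ.head? = some σ ∧ γ.getLast? = some τ ∧ ∀ ρ ∈ γ, f ⊆ ρ

/-- The vertex set of a complex. -/
def vertexSet (K : Finset (Finset V)) : Finset V := K.biUnion id

/-- A proper coloring of the 1-skeleton of `K`: the endpoints of every edge
(2-element face) receive distinct colors. -/
def ProperColoring {α : Type*} (K : Finset (Finset V)) (c : V → α) : Prop :=
  ∀ v w, v ≠ w → ({v, w} : Finset V) ∈ K → c v ≠ c w

/-- A codimension-2 face `f` is odd if its link graph is not 2-colorable (not bipartite). -/
def OddFace (K : Finset (Finset V)) (f : Finset V) : Prop :=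
  ¬ ∃ b : V → Bool, ∀ w w', w ∉ f → w' ∉ f → w ≠ w' →
      f ∪ {w, w'} ∈ K → b w ≠ b w'

/-- Stellar subdivision of the edge `e` of `K` by the new vertex `u`:
faces not containing `e` are kept; every face containing `e` is replaced by the
cones of `u` over the faces of its boundary not containing `e`. -/
def stellarSub (K : Finset (Finset V)) (e : Finset V) (u : V) : Finset (Finset V) :=
  K.filter (fun f => ¬ e ⊆ f) ∪
    (K.filter fun f => e ⊆ f).biUnion fun f =>
      e.biUnion fun x => ((f.erase x).powerset).image fun g => insert u g

/-- `EdgeSubdivSeq K K'` : `K'` is obtained from `K` by a finite sequence of stellar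
subdivisions of edges (each subdividing vertex being a fresh vertex). -/
inductive EdgeSubdivSeq : Finset (Finset V) → Finset (Finset V) → Prop
  | refl (K : Finset (Finset V)) : EdgeSubdivSeq K K
  | step (K L : Finset (Finset V)) (e : Finset V) (u : V) :
      EdgeSubdivSeq K L → e ∈ L → e.card = 2 → u ∉ vertexSet L →
      EdgeSubdivSeq K (stellarSub L e u)

/-- A boundary ridge: a `(d-1)`-dimensional face contained in exactly one facet. -/
def IsBoundaryRidge (K : Finset (Finset V)) (d : ℕ) (g : Finset V) : Prop :=
  g ∈ K ∧ g.card = d ∧ (K.filter fun τ => τ.card = d + 1 ∧ g ⊆ τ).card = 1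

/-- Adjacency of labeled facets in the partial unfolding: `(σ,v)` and `(τ,w)` are glued
along their common ridge iff `σ, τ` are neighboring facets and `⟨σ,τ⟩(v) = w`. -/
def unfAdj (K : Finset (Finset V)) (d : ℕ) (p q : Finset V × V) : Prop :=
  Neighboring K d p.1 q.1 ∧ p.2 ∈ p.1 ∧ q.2 ∈ q.1 ∧ persp p.1 q.1 p.2 = q.2

/-- Reachability (connected components) in the partial unfolding. -/
def UnfReach (K : Finset (Finset V)) (d : ℕ) : Finset V × V → Finset V × V → Prop :=
  Relation.ReflTransGen fun p q => unfAdj K d p q ∨ unfAdj K d q p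


section Aux
variable {K : Finset (Finset V)} {d : ℕ}

lemma aux_sdiff_card_one {σ τ : Finset V} (h2 : τ.card = d + 1)
    (h3 : (σ ∩ τ).card = d) : (τ \ σ).card = 1 := by
  have he : τ \ σ = τ \ (τ ∩ σ) := by ext x; simp [mem_sdiff]
  rw [he, card_sdiff_of_subset inter_subset_left, inter_comm, h3, h2]; omega

lemma aux_persp_mem {σ τ : Finset V} (h2 : τ.card = d + 1)
    (h3 : (σ ∩ τ).card = d) {v : V} : persp σ τ v ∈ τ := by
  unfold persp
  split
  · assumption
  · have hne : (τ \ σ).Nonempty :=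
      card_pos.mp (by rw [aux_sdiff_card_one h2 h3]; omega)
    rw [dif_pos hne]
    exact (mem_sdiff.mp hne.choose_spec).1

lemma aux_persp_symm {σ τ : Finset V} (h1 : σ.card = d + 1) (h2 : τ.card = d + 1)
    (h3 : (σ ∩ τ).card = d) {v w : V}
    (hv : v ∈ σ) (hp : persp σ τ v = w) : persp τ σ w = v := by
  have h3' : (τ ∩ σ).card = d := by rw [inter_comm]; exact h3
  unfold persp at hp ⊢
  by_cases hvτ : v ∈ τ
  · rw [if_pos hvτ] at hp
    subst hp
    rw [if_pos hv]
  · rw [if_neg hvτ] at hp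
    have hne : (τ \ σ).Nonempty :=
      card_pos.mp (by rw [aux_sdiff_card_one h2 h3]; omega)
    rw [dif_pos hne] at hp
    have hwmem : w ∈ τ \ σ := hp ▸ hne.choose_spec
    have hwσ : w ∉ σ := (mem_sdiff.mp hwmem).2
    rw [if_neg hwσ]
    have hne' : (σ \ τ).Nonempty :=
      card_pos.mp (by rw [aux_sdiff_card_one h1 h3']; omega)
    rw [dif_pos hne']
    have hm1 : hne'.choose ∈ σ \ τ := hne'.choose_spec
    have hm2 : v ∈ σ \ τ := mem_sdiff.mpr ⟨hv, hvτ⟩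
    exact card_le_one.mp (le_of_eq (aux_sdiff_card_one h1 h3')) _ hm1 _ hm2

lemma aux_unfAdj_symm {p q : Finset V × V} (h : unfAdj K d p q) : unfAdj K d q p := by
  obtain ⟨⟨hσ, hτ, hi⟩, hv, hw, hp⟩ := h
  exact ⟨⟨hτ, hσ, by rw [inter_comm]; exact hi⟩, hw, hv,
    aux_persp_symm hσ.2 hτ.2 hi hv hp⟩

lemma aux_projAlong_append (γ : List (Finset V)) (hne : γ ≠ []) (τ : Finset V) (v : V) :
    projAlong (γ ++ [τ]) v = persp (γ.getLast hne) τ (projAlong γ v) := by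
  induction γ generalizing v with
  | nil => exact absurd rfl hne
  | cons σ rest ih =>
    cases rest with
    | nil => simp [projAlong]
    | cons ρ rest' =>
      show projAlong (ρ :: rest' ++ [τ]) (persp σ ρ v) = _
      rw [ih (by simp) (persp σ ρ v)]
      rw [List.getLast_cons (by simp : (ρ :: rest') ≠ [])]
      rfl

lemma aux_reach_of_path :
    ∀ (γ : List (Finset V)), (∀ ρ ∈ γ, IsFacet K d ρ) →
    γ.Chain' (fun σ τ => (σ ∩ τ).card = d) →
    ∀ σ v, γ.head? = some σ → v ∈ σ → ∀ τ, γ.getLast? = some τ →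
    UnfReach K d (σ, v) (τ, projAlong γ v) := by
  intro γ
  induction γ with
  | nil => intro _ _ σ v hσ; simp at hσ
  | cons σ' rest ih =>
    intro hmem hch σ v hσ hv τ hτ
    have hσσ : σ' = σ := by simpa using hσ
    subst hσσ
    cases rest with
    | nil =>
      have hττ : τ = σ' := by have := hτ; simp at this; exact this.symm
      subst hττ
      exact Relation.ReflTransGen.refl
    | cons ρ rest' =>
      obtain ⟨hr, hch'⟩ := List.isChain_cons_cons.mp hch
      have hσf : IsFacet K d σ' := hmem _ (by simp)
      have hρf : IsFacet K d ρ := hmem _ (by simp)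
      have hwρ : persp σ' ρ v ∈ ρ := aux_persp_mem hρf.2 hr
      have hadj : unfAdj K d (σ', v) (ρ, persp σ' ρ v) :=
        ⟨⟨hσf, hρf, hr⟩, hv, hwρ, rfl⟩
      refine Relation.ReflTransGen.head (Or.inl hadj) ?_
      have := ih (fun x hx => hmem x (by simp [hx])) hch' ρ (persp σ' ρ v)
        (by simp) hwρ τ (by rw [← hτ, List.getLast?_cons_cons])
      exact this

lemma aux_path_of_reach {p q : Finset V × V} (h : UnfReach K d p q)
    (hf : IsFacet K d p.1) (hv : p.2 ∈ p.1) :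
    ∃ γ, IsFacetPath K d γ ∧ γ.head? = some p.1 ∧ γ.getLast? = some q.1 ∧
      projAlong γ p.2 = q.2 := by
  induction h with
  | refl =>
    exact ⟨[p.1], ⟨by simp, by simpa using hf, List.isChain_singleton _⟩, by simp, by simp, rfl⟩
  | @tail m q hpm hmq ih =>
    obtain ⟨γ, ⟨hne, hmem, hch⟩, hh, hl, hproj⟩ := ih
    have hadj : unfAdj K d m q := by
      rcases hmq with h' | h'
      · exact h'
      · exact aux_unfAdj_symm h'
    obtain ⟨⟨hmf, hqf, hi⟩, hm2, hq2, hp⟩ := hadj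
    refine ⟨γ ++ [q.1], ⟨by simp, ?_, ?_⟩, ?_, ?_, ?_⟩
    · intro ρ hρ
      rcases List.mem_append.mp hρ with h' | h'
      · exact hmem _ h'
      · simp at h'; subst h'; exact hqf
    · rw [List.Chain', List.isChain_append]
      refine ⟨hch, by simp, ?_⟩
      intro x hx y hy
      have hx' : x = m.1 := by rw [hl] at hx; have := hx; simp at this; exact this.symm
      have hy' : y = q.1 := by have := hy; simp at this; exact this.symm
      subst hx'; subst hy'
      exact hi
    · rw [List.head?_append_of_ne_nil _ hne, hh]
    · simp [List.getLast?_concat]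
    · have hlast : γ.getLast hne = m.1 := by
        have := List.getLast?_eq_getLast hne
        rw [this] at hl
        simpa using hl
      rw [aux_projAlong_append γ hne, hlast, hproj, hp]

end Aux

/-- Two labeled facets `(σ,v)`, `(τ,w)` lie in the same connected
component of the partial unfolding iff there is a facet path `γ` from `σ` to `τ` with
`⟨γ⟩(v) = w`; consequently the components correspond to the orbits of `Π(K,σ₀)`
on `V(σ₀)`. -/
theorem unfolding_components
    (K : Finset (Finset V)) (d : ℕ) (hK : IsComplex K) (hpure : IsPure K d)
    (hconn : StronglyConnected K d)
    (σ₀ : Finset V) (h0 : IsFacet K d σ₀) :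
    (∀ σ τ v w, IsFacet K d σ → IsFacet K d τ → v ∈ σ → w ∈ τ →
      (UnfReach K d (σ, v) (τ, w) ↔
        ∃ γ, IsFacetPath K d γ ∧ γ.head? = some σ ∧ γ.getLast? = some τ ∧
          projAlong γ v = w)) ∧
    (∀ v ∈ σ₀, ∀ w ∈ σ₀,
      UnfReach K d (σ₀, v) (σ₀, w) ↔
        ∃ γ, IsFacetPath K d γ ∧ γ.head? = some σ₀ ∧ γ.getLast? = some σ₀ ∧
          projAlong γ v = w) := by
  have main : ∀ σ τ v w, IsFacet K d σ → IsFacet K d τ → v ∈ σ → w ∈ τ →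
      (UnfReach K d (σ, v) (τ, w) ↔
        ∃ γ, IsFacetPath K d γ ∧ γ.head? = some σ ∧ γ.getLast? = some τ ∧
          projAlong γ v = w) := by
    intro σ τ v w hσ hτ hv hw
    constructor
    · intro h
      exact aux_path_of_reach h hσ hv
    · rintro ⟨γ, ⟨hne, hmem, hch⟩, hh, hl, hproj⟩
      have := aux_reach_of_path γ hmem hch σ v hh hv τ hl
      rwa [hproj] at this
  exact ⟨main, fun v hv w hw => main σ₀ σ₀ v w h0 h0 hv hw⟩
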